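/- For every idealised conformity measure A, every x ∈ X and every τ ∈ [0,1]: Σ_{y∈Y} p_A(x,y,τ) = ∫_0^1 |Γ_A^ε(x,τ)| dε. -/

import Mathlib

noncomputable section Conformal

open Finset

variable {X Y : Type*} [Fintype X] [Fintype Y] [DecidableEq Y]

/-- The p-value `p_A(x,y,τ) = Q{z : A z < A (x,y)} + τ·Q{z : A z = A (x,y)}`. -/
def pValue (Q A : X × Y → ℝ) (x : X) (y : Y) (τ : ℝ) : ℝ :=
  (∑ z : X × Y, if A z < A (x, y) then Q z else 0)
    + τ * ∑ z : X × Y, if A z = A (x, y) then Q z else 0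

/-- The prediction set `Γ_A^ε(x,τ) = {y : p_A(x,y,τ) > ε}`. -/
def predSet (Q A : X × Y → ℝ) (ε : ℝ) (x : X) (τ : ℝ) : Finset Y :=
  Finset.univ.filter fun y => ε < pValue Q A x y τ

/-- The marginal `Q_X` of `Q` on the object space. -/
def margX (Q : X × Y → ℝ) (x : X) : ℝ := ∑ y, Q (x, y)

/-- The marginal `Q_Y` of `Q` on the label space. -/
def margY (Q : X × Y → ℝ) (y : Y) : ℝ := ∑ x, Q (x, y)

/-- The conditional probability `Q(y|x)`; as a function of `z = (x,y)` this is the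
CP idealised conformity measure. -/
def condQ (Q : X × Y → ℝ) (z : X × Y) : ℝ := Q z / margX Q z.1

/-- Expectation `E_{x,τ}` with `x ~ Q_X` and `τ` uniform on `[0,1]`, independent. -/
def expXT (Q : X × Y → ℝ) (g : X → ℝ → ℝ) : ℝ :=
  ∑ x, margX Q x * ∫ τ in (0:ℝ)..1, g x τ

/-- Expectation `E_{(x,y),τ}` with `(x,y) ~ Q` and `τ` uniform on `[0,1]`, independent. -/
def expZT (Q : X × Y → ℝ) (g : X × Y → ℝ → ℝ) : ℝ :=
  ∑ z, Q z * ∫ τ in (0:ℝ)..1, g z τ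

open Classical in
/-- Probability `Prob_{x,τ}` with `x ~ Q_X` and `τ` uniform on `[0,1]`, independent. -/
def probXT (Q : X × Y → ℝ) (P : X → ℝ → Prop) : ℝ :=
  expXT Q fun x τ => if P x τ then 1 else 0

open Classical in
/-- Probability `Prob_{(x,y),τ}` with `(x,y) ~ Q` and `τ` uniform on `[0,1]`, independent. -/
def probZT (Q : X × Y → ℝ) (P : X × Y → ℝ → Prop) : ℝ :=
  expZT Q fun z τ => if P z τ then 1 else 0

/-- `A` is a refinement of `B`. -/
def Refines (A B : X × Y → ℝ) : Prop :=
  ∀ z1 z2 : X × Y, B z1 < B z2 → A z1 < A z2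

/-- `max_{y' ≠ y} p_A(x,y',τ)`. -/
def maxOther (Q A : X × Y → ℝ) (x : X) (y : Y) (τ : ℝ) : ℝ :=
  ⨆ y' : {y' : Y // y' ≠ y}, pValue Q A x y'.1 τ

/-- The unconfidence `min_y max_{y' ≠ y} p_A(x,y',τ)`. -/
def unconf (Q A : X × Y → ℝ) (x : X) (τ : ℝ) : ℝ := ⨅ y : Y, maxOther Q A x y τ

/-- The credibility `max_y p_A(x,y,τ)`. -/
def maxPV (Q A : X × Y → ℝ) (x : X) (τ : ℝ) : ℝ := ⨆ y : Y, pValue Q A x y τ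

/-- The predictability `f(x) = max_y Q(y|x)`. -/
def predictability (Q : X × Y → ℝ) (x : X) : ℝ := ⨆ y : Y, condQ Q (x, y)

/-- `c` is a choice function: `Q(c x | x) = f(x)` for all `x`. -/
def IsChoiceFun (Q : X × Y → ℝ) (c : X → Y) : Prop :=
  ∀ x, condQ Q (x, c x) = predictability Q x

/-- The signed predictability (SP) idealised conformity measure corresponding to `c`. -/
def SPMeasure (Q : X × Y → ℝ) (c : X → Y) : X × Y → ℝ := fun z =>
  if z.2 = c z.1 then predictability Q z.1 else -predictability Q z.1

/-- The modified conditional probability (MCP) idealised conformity measure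
corresponding to `c`. -/
def MCPMeasure (Q : X × Y → ℝ) (c : X → Y) : X × Y → ℝ := fun z =>
  if z.2 = c z.1 then condQ Q z else condQ Q z - 1

/-- The modified signed predictability (MSP) idealised conformity measure
(independent of the choice function: `y = ŷ(x)` iff `Q(y|x) = f(x)` when `f(x) > 1/2`). -/
def MSPMeasure (Q : X × Y → ℝ) : X × Y → ℝ := fun z =>
  if 1 / 2 < predictability Q z.1 then
    if condQ Q z = predictability Q z.1 then predictability Q z.1
    else -predictability Q z.1
  else 0

/-- S-optimality. -/
def SOpt (Q A : X × Y → ℝ) : Prop :=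
  ∀ B : X × Y → ℝ,
    expXT Q (fun x τ => ∑ y, pValue Q A x y τ)
      ≤ expXT Q (fun x τ => ∑ y, pValue Q B x y τ)

/-- N-optimality. -/
def NOpt (Q A : X × Y → ℝ) : Prop :=
  ∀ B : X × Y → ℝ, ∀ ε ∈ Set.Ioo (0:ℝ) 1,
    expXT Q (fun x τ => ((predSet Q A ε x τ).card : ℝ))
      ≤ expXT Q (fun x τ => ((predSet Q B ε x τ).card : ℝ))

/-- OF-optimality. -/
def OFOpt (Q A : X × Y → ℝ) : Prop :=
  ∀ B : X × Y → ℝ,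
    expZT Q (fun z τ => ∑ y' ∈ Finset.univ.erase z.2, pValue Q A z.1 y' τ)
      ≤ expZT Q (fun z τ => ∑ y' ∈ Finset.univ.erase z.2, pValue Q B z.1 y' τ)

/-- OE-optimality. -/
def OEOpt (Q A : X × Y → ℝ) : Prop :=
  ∀ B : X × Y → ℝ, ∀ ε ∈ Set.Ioo (0:ℝ) 1,
    expZT Q (fun z τ => (((predSet Q A ε z.1 τ).erase z.2).card : ℝ))
      ≤ expZT Q (fun z τ => (((predSet Q B ε z.1 τ).erase z.2).card : ℝ))

/-- U-optimality. -/
def UOpt (Q A : X × Y → ℝ) : Prop :=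
  ∀ B : X × Y → ℝ,
    expXT Q (unconf Q A) < expXT Q (unconf Q B) ∨
      (expXT Q (unconf Q A) = expXT Q (unconf Q B) ∧
        expXT Q (maxPV Q A) ≤ expXT Q (maxPV Q B))

/-- M-optimality. -/
def MOpt (Q A : X × Y → ℝ) : Prop :=
  ∀ B : X × Y → ℝ, ∀ ε ∈ Set.Ioo (0:ℝ) 1,
    probXT Q (fun x τ => 1 < (predSet Q A ε x τ).card)
        < probXT Q (fun x τ => 1 < (predSet Q B ε x τ).card) ∨
      (probXT Q (fun x τ => 1 < (predSet Q A ε x τ).card)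
          = probXT Q (fun x τ => 1 < (predSet Q B ε x τ).card) ∧
        probXT Q (fun x τ => (predSet Q B ε x τ).card = 0)
          ≤ probXT Q (fun x τ => (predSet Q A ε x τ).card = 0))

/-- F-optimality. -/
def FOpt (Q A : X × Y → ℝ) : Prop :=
  ∀ B : X × Y → ℝ,
    expXT Q (fun x τ => (∑ y, pValue Q A x y τ) - maxPV Q A x τ)
        < expXT Q (fun x τ => (∑ y, pValue Q B x y τ) - maxPV Q B x τ) ∨
      (expXT Q (fun x τ => (∑ y, pValue Q A x y τ) - maxPV Q A x τ)
          = expXT Q (fun x τ => (∑ y, pValue Q B x y τ) - maxPV Q B x τ) ∧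
        expXT Q (maxPV Q A) ≤ expXT Q (maxPV Q B))

/-- E-optimality. -/
def EOpt (Q A : X × Y → ℝ) : Prop :=
  ∀ B : X × Y → ℝ, ∀ ε ∈ Set.Ioo (0:ℝ) 1,
    expXT Q (fun x τ => max (((predSet Q A ε x τ).card : ℝ) - 1) 0)
        < expXT Q (fun x τ => max (((predSet Q B ε x τ).card : ℝ) - 1) 0) ∨
      (expXT Q (fun x τ => max (((predSet Q A ε x τ).card : ℝ) - 1) 0)
          = expXT Q (fun x τ => max (((predSet Q B ε x τ).card : ℝ) - 1) 0) ∧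
        probXT Q (fun x τ => (predSet Q B ε x τ).card = 0)
          ≤ probXT Q (fun x τ => (predSet Q A ε x τ).card = 0))

/-- OU-optimality. -/
def OUOpt (Q A : X × Y → ℝ) : Prop :=
  ∀ B : X × Y → ℝ,
    expZT Q (fun z τ => maxOther Q A z.1 z.2 τ)
      ≤ expZT Q (fun z τ => maxOther Q B z.1 z.2 τ)

/-- OM-optimality. -/
def OMOpt (Q A : X × Y → ℝ) : Prop :=
  ∀ B : X × Y → ℝ, ∀ ε ∈ Set.Ioo (0:ℝ) 1,
    probZT Q (fun z τ => ((predSet Q A ε z.1 τ).erase z.2).Nonempty)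
      ≤ probZT Q (fun z τ => ((predSet Q B ε z.1 τ).erase z.2).Nonempty)

end Conformal

/-- `Σ_y p_A(x,y,τ) = ∫_0^1 |Γ_A^ε(x,τ)| dε`. -/
theorem stmt9 {X Y : Type*} [Fintype X] [Fintype Y] [DecidableEq Y] [Nonempty X]
    (hY : 2 ≤ Fintype.card Y) (Q : X × Y → ℝ) (hQ0 : ∀ z, 0 ≤ Q z)
    (hQ1 : ∑ z : X × Y, Q z = 1) (hQX : ∀ x, 0 < margX Q x) (A : X × Y → ℝ) (x : X) (τ : ℝ) (hτ : τ ∈ Set.Icc (0:ℝ) 1) :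
    ∑ y, pValue Q A x y τ = ∫ ε in (0:ℝ)..1, ((predSet Q A ε x τ).card : ℝ) := by
  obtain ⟨hτ0, hτ1⟩ := hτ
  -- bounds on p-values
  have hp0 : ∀ y, 0 ≤ pValue Q A x y τ := fun y => by
    have h1 : 0 ≤ ∑ z : X × Y, (if A z < A (x, y) then Q z else 0) :=
      Finset.sum_nonneg fun z _ => by split_ifs; exacts [hQ0 z, le_rfl]
    have h2 : 0 ≤ ∑ z : X × Y, (if A z = A (x, y) then Q z else 0) :=
      Finset.sum_nonneg fun z _ => by split_ifs; exacts [hQ0 z, le_rfl]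
    exact add_nonneg h1 (mul_nonneg hτ0 h2)
  have hp1 : ∀ y, pValue Q A x y τ ≤ 1 := fun y => by
    have h2 : 0 ≤ ∑ z : X × Y, (if A z = A (x, y) then Q z else 0) :=
      Finset.sum_nonneg fun z _ => by split_ifs; exacts [hQ0 z, le_rfl]
    have hle : τ * (∑ z : X × Y, if A z = A (x, y) then Q z else 0)
        ≤ ∑ z : X × Y, (if A z = A (x, y) then Q z else 0) := by
      nlinarith
    have hsum : (∑ z : X × Y, if A z < A (x, y) then Q z else 0)
        + (∑ z : X × Y, if A z = A (x, y) then Q z else 0) ≤ 1 := by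
      rw [← Finset.sum_add_distrib, ← hQ1]
      apply Finset.sum_le_sum
      intro z _
      split_ifs with h h'
      · exact absurd h' h.ne
      · simp [hQ0 z]
      · simp
      · simp [hQ0 z]
    unfold pValue
    linarith
  -- the indicator function and its properties
  have key : ∀ y : Y, ∫ ε in (0:ℝ)..1,
      (if ε < pValue Q A x y τ then (1:ℝ) else 0) = pValue Q A x y τ := by
    intro y
    set c := pValue Q A x y τ with hc
    have heq : (fun ε : ℝ => if ε < c then (1:ℝ) else 0)
        = Set.indicator (Set.Iio c) (fun _ => (1:ℝ)) := by
      funext ε; simp [Set.indicator_apply, Set.mem_Iio]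
    rw [heq, intervalIntegral.integral_of_le (by norm_num : (0:ℝ) ≤ 1),
        MeasureTheory.setIntegral_indicator measurableSet_Iio]
    have hset : Set.Ioc (0:ℝ) 1 ∩ Set.Iio c = Set.Ioo 0 c := by
      ext t
      constructor
      · rintro ⟨⟨h2, h3⟩, ht⟩; exact ⟨h2, ht⟩
      · rintro ⟨h2, h3⟩; exact ⟨⟨h2, le_trans (le_of_lt h3) (hp1 y)⟩, h3⟩
    rw [hset]
    simp [Real.volume_Ioo, ENNReal.toReal_ofReal (by simpa using hp0 y)]
    exact hp0 y
  have hint : ∀ y : Y, IntervalIntegrable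
      (fun ε => if ε < pValue Q A x y τ then (1:ℝ) else 0)
      MeasureTheory.volume 0 1 := by
    intro y
    have anti : Antitone fun ε : ℝ => if ε < pValue Q A x y τ then (1:ℝ) else 0 := by
      intro a b hab
      dsimp only
      split_ifs with hb ha
      · exact le_rfl
      · exact absurd (lt_of_le_of_lt hab hb) ha
      · norm_num
      · exact le_rfl
    exact anti.intervalIntegrable
  have hcard : ∀ ε : ℝ, ((predSet Q A ε x τ).card : ℝ)
      = ∑ y, if ε < pValue Q A x y τ then (1:ℝ) else 0 := by
    intro ε
    rw [predSet, Finset.card_filter]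
    push_cast
    rfl
  calc ∑ y, pValue Q A x y τ
      = ∑ y, ∫ ε in (0:ℝ)..1, (if ε < pValue Q A x y τ then (1:ℝ) else 0) :=
        Finset.sum_congr rfl fun y _ => (key y).symm
    _ = ∫ ε in (0:ℝ)..1, ∑ y, (if ε < pValue Q A x y τ then (1:ℝ) else 0) :=
        (intervalIntegral.integral_finset_sum fun y _ => hint y).symm
    _ = ∫ ε in (0:ℝ)..1, ((predSet Q A ε x τ).card : ℝ) :=
        intervalIntegral.integral_congr fun ε _ => (hcard ε).symm
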